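/- A real number α is irrational if and only if there exists a sequence of integers {q_n} such that {q_n·α}·({q_n·α} − 1) → 0 as n → ∞, where {x} denotes the fractional part of x, and q_n·α is never an integer. -/

import Mathlib

open Filter Int

theorem stmt_2 (α : ℝ) :
    Irrational α ↔
      ∃ q : ℕ → ℤ, (∀ n, ∀ m : ℤ, (q n : ℝ) * α ≠ m) ∧
        Filter.Tendsto
          (fun n => Int.fract ((q n : ℝ) * α) * (Int.fract ((q n : ℝ) * α) - 1))
          Filter.atTop (nhds 0) := by
  constructor
  · intro hα
    have key : ∀ n : ℕ, ∃ k : ℤ, 0 < k ∧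
        |Int.fract ((k : ℝ) * α) * (Int.fract ((k : ℝ) * α) - 1)| ≤ 1 / (n + 1) := by
      intro n
      obtain ⟨j, k, hk0, _, hjk⟩ :=
        Real.exists_int_int_abs_mul_sub_le α (n := n + 1) (Nat.succ_pos n)
      refine ⟨k, hk0, ?_⟩
      set x := (k : ℝ) * α with hx
      have hf0 := Int.fract_nonneg x
      have hf1 := (Int.fract_lt_one x).le
      have hfloor : Int.fract x = x - ⌊x⌋ := rfl
      have habs : |Int.fract x * (Int.fract x - 1)| = Int.fract x * (1 - Int.fract x) := by
        rw [abs_of_nonpos (by nlinarith)]; ring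
      rw [habs]
      have hb : Int.fract x * (1 - Int.fract x) ≤ |x - j| := by
        rcases le_or_gt j ⌊x⌋ with h | h
        · have h' : (j : ℝ) ≤ ⌊x⌋ := by exact_mod_cast h
          have h1 : Int.fract x ≤ x - j := by rw [hfloor]; linarith
          have h2 : x - j ≤ |x - j| := le_abs_self _
          nlinarith
        · have h' : (⌊x⌋ : ℝ) + 1 ≤ j := by exact_mod_cast h
          have h1 : 1 - Int.fract x ≤ j - x := by rw [hfloor]; linarith
          have h2 : j - x ≤ |x - j| := by rw [abs_sub_comm]; exact le_abs_self _
          nlinarith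
      refine hb.trans (hjk.trans ?_)
      have h1 : (0:ℝ) < (n:ℝ) + 1 := by positivity
      rw [div_le_div_iff₀ (by positivity) h1]
      push_cast; nlinarith
    choose q hq0 hqb using key
    refine ⟨q, ?_, ?_⟩
    · intro n m hm
      exact ((hα.intCast_mul (by exact_mod_cast (hq0 n).ne')).ne_int m) hm
    · apply squeeze_zero_norm hqb
      exact tendsto_one_div_add_atTop_nhds_zero_nat
  · rintro ⟨q, hne, htend⟩
    rintro ⟨r, hr⟩
    have hbpos : (0:ℤ) < (r.den : ℤ) := by exact_mod_cast r.pos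
    have hbR : (0:ℝ) < (r.den : ℝ) := by exact_mod_cast r.pos
    have hlb : ∀ n : ℕ, (1 : ℝ) / (r.den : ℝ) ^ 2 ≤
        |Int.fract ((q n : ℝ) * α) * (Int.fract ((q n : ℝ) * α) - 1)| := by
      intro n
      set x := (q n : ℝ) * α with hx
      have hf0 := Int.fract_nonneg x
      have hf1 := Int.fract_lt_one x
      have hfloor : Int.fract x = x - ⌊x⌋ := rfl
      -- fract x > 0
      have hfpos : 0 < Int.fract x := by
        rcases lt_or_eq_of_le hf0 with h | h
        · exact h
        · exfalso
          apply hne n ⌊x⌋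
          have : x = (⌊x⌋ : ℝ) := by rw [hfloor] at h; linarith
          exact this
      -- x * r.den = q n * r.num
      have hxb : x * (r.den : ℝ) = (q n : ℝ) * (r.num : ℝ) := by
        rw [hx, ← hr, Rat.cast_def]
        field_simp
      set t : ℤ := q n * r.num - ⌊x⌋ * r.den with htdef
      have htR : (t : ℝ) = Int.fract x * (r.den : ℝ) := by
        rw [htdef, hfloor]
        push_cast
        nlinarith [hxb]
      have ht1 : (1:ℤ) ≤ t := by
        have : (0:ℝ) < (t:ℝ) := by rw [htR]; positivity
        exact_mod_cast this
      have ht2 : t ≤ (r.den : ℤ) - 1 := by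
        have : (t:ℝ) < (r.den : ℝ) := by rw [htR]; nlinarith
        have h' : t < (r.den : ℤ) := by exact_mod_cast this
        omega
      have hflb : 1 / (r.den : ℝ) ≤ Int.fract x := by
        rw [div_le_iff₀ hbR]
        have : (1:ℝ) ≤ (t:ℝ) := by exact_mod_cast ht1
        linarith [htR]
      have hfub : 1 / (r.den : ℝ) ≤ 1 - Int.fract x := by
        rw [div_le_iff₀ hbR]
        have h' : (t:ℝ) ≤ (r.den : ℝ) - 1 := by exact_mod_cast ht2
        nlinarith [htR]
      have habs : |Int.fract x * (Int.fract x - 1)| = Int.fract x * (1 - Int.fract x) := by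
        rw [abs_of_nonpos (by nlinarith)]; ring
      rw [habs]
      have h1b : 0 < 1 / (r.den : ℝ) := by positivity
      calc (1:ℝ) / (r.den:ℝ)^2 = (1/(r.den:ℝ)) * (1/(r.den:ℝ)) := by ring
        _ ≤ Int.fract x * (1 - Int.fract x) := by nlinarith
    have hpos : (0:ℝ) < 1 / (r.den : ℝ) ^ 2 := by positivity
    obtain ⟨N, hN⟩ := Metric.tendsto_atTop.mp htend _ hpos
    have hn := hN N le_rfl
    rw [Real.dist_eq, sub_zero] at hn
    exact absurd hn (not_lt.mpr (hlb N))
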